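/- Let H be a coquasitriangular Hopf algebra with universal r-form r, X ⊆ H a subalgebra and left coideal with the invertibility-closure property, e^1,…,e^M ∈ X with Δ(e^i) = Σ_j π^i_j ⊗ e^j, b^1,…,b^M ∈ X with Δ(b^i) = Σ_j ψ^i_j ⊗ b^j, and ν a covariant algebra endomorphism of X (Δ∘ν = (id ⊗ ν)∘Δ). Define χ^i(a) = r(b^i ⊗ ν(a)) − ε(b^i)ε(a) and assume the M×M matrix χ with entries χ^{ij} = χ^i(e^j) is invertible. Then the operators ∂_i(a) := a_{(1)} χ^k(a_{(2)}) (χ^{-1})_{jk} S(π^j_i) map X into X, i.e. ∂_i(X) ⊆ X for all i. -/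

import Mathlib

open TensorProduct MulOpposite

open Coalgebra HopfAlgebra

noncomputable section
namespace Stmt12Aux

variable {R : Type} [CommRing R]
variable {C : Type} [AddCommGroup C] [Module R C] [Coalgebra R C]
variable {A : Type} [Ring A] [Algebra R A]

/-- convolution product of linear maps from a coalgebra to an algebra -/
def conv (f g : C →ₗ[R] A) : C →ₗ[R] A :=
  LinearMap.mul' R A ∘ₗ TensorProduct.map f g ∘ₗ Coalgebra.comul

lemma conv_apply (f g : C →ₗ[R] A) {c : C} {ι : Type} (re : Coalgebra.Repr R c ι) :
    conv f g c = ∑ i ∈ re.index, f (re.left i) * g (re.right i) := by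
  simp only [conv, LinearMap.comp_apply, ← re.eq, map_sum, TensorProduct.map_tmul,
    LinearMap.mul'_apply]

/-- the convolution unit -/
def convOne : C →ₗ[R] A := Algebra.linearMap R A ∘ₗ Coalgebra.counit

lemma convOne_apply (c : C) : (convOne : C →ₗ[R] A) c = algebraMap R A (counit c) := rfl

lemma repr_smul_left {c : C} {ι : Type} (re : Coalgebra.Repr R c ι) :
    ∑ i ∈ re.index, counit (R := R) (re.left i) • re.right i = c := by
  have h := Coalgebra.sum_counit_tmul_eq re
  apply_fun (TensorProduct.lid R C) at h
  simp only [map_sum, TensorProduct.lid_tmul, one_smul] at h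
  exact h

lemma repr_smul_right {c : C} {ι : Type} (re : Coalgebra.Repr R c ι) :
    ∑ i ∈ re.index, counit (R := R) (re.right i) • re.left i = c := by
  have h := Coalgebra.sum_tmul_counit_eq re
  apply_fun (TensorProduct.rid R C) at h
  simp only [map_sum, TensorProduct.rid_tmul, one_smul] at h
  exact h

lemma conv_one_left (f : C →ₗ[R] A) : conv convOne f = f := by
  ext c
  rw [conv_apply _ _ (ℛ R c)]
  have h0 := repr_smul_left (ℛ R c)
  calc ∑ i ∈ (ℛ R c).index, convOne ((ℛ R c).left i) * f ((ℛ R c).right i)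
      = ∑ i ∈ (ℛ R c).index, counit (R := R) ((ℛ R c).left i) • f ((ℛ R c).right i) := by
        refine Finset.sum_congr rfl fun i _ => ?_
        rw [convOne_apply, ← Algebra.smul_def]
    _ = f c := by
        conv_rhs => rw [← h0, map_sum]
        exact Finset.sum_congr rfl fun i _ => (map_smul f _ _).symm

lemma conv_one_right (f : C →ₗ[R] A) : conv f convOne = f := by
  ext c
  rw [conv_apply _ _ (ℛ R c)]
  have h0 := repr_smul_right (ℛ R c)
  calc ∑ i ∈ (ℛ R c).index, f ((ℛ R c).left i) * convOne ((ℛ R c).right i)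
      = ∑ i ∈ (ℛ R c).index, counit (R := R) ((ℛ R c).right i) • f ((ℛ R c).left i) := by
        refine Finset.sum_congr rfl fun i _ => ?_
        rw [convOne_apply, ← Algebra.commutes, ← Algebra.smul_def]
    _ = f c := by
        conv_rhs => rw [← h0, map_sum]
        exact Finset.sum_congr rfl fun i _ => (map_smul f _ _).symm

lemma conv_assoc (f g h : C →ₗ[R] A) : conv (conv f g) h = conv f (conv g h) := by
  ext c
  set re := ℛ R c with hre
  set a₁ : (i : re.ι) → Coalgebra.Repr R (re.left i) (C × C) := fun i => ℛ R (re.left i) with ha₁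
  set a₂ : (i : re.ι) → Coalgebra.Repr R (re.right i) (C × C) := fun i => ℛ R (re.right i) with ha₂
  have key := Coalgebra.sum_tmul_tmul_eq re a₁ a₂
  apply_fun (LinearMap.mul' R A ∘ₗ TensorProduct.map (f : C →ₗ[R] A)
      (LinearMap.mul' R A ∘ₗ TensorProduct.map g h)) at key
  simp only [map_sum, LinearMap.comp_apply, TensorProduct.map_tmul,
    LinearMap.mul'_apply] at key
  rw [conv_apply _ _ re, conv_apply _ _ re]
  calc ∑ i ∈ re.index, conv f g (re.left i) * h (re.right i)
      = ∑ i ∈ re.index, ∑ j ∈ (a₁ i).index,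
          f ((a₁ i).left j) * (g ((a₁ i).right j) * h (re.right i)) := by
        refine Finset.sum_congr rfl fun i _ => ?_
        rw [conv_apply _ _ (a₁ i), Finset.sum_mul]
        exact Finset.sum_congr rfl fun j _ => mul_assoc _ _ _
    _ = ∑ i ∈ re.index, ∑ j ∈ (a₂ i).index,
          f (re.left i) * (g ((a₂ i).left j) * h ((a₂ i).right j)) := key
    _ = ∑ i ∈ re.index, f (re.left i) * conv g h (re.right i) := by
        refine Finset.sum_congr rfl fun i _ => ?_
        rw [conv_apply _ _ (a₂ i), Finset.mul_sum]

lemma conv_cancel (f g h : C →ₗ[R] A) (h1 : conv f g = convOne) (h2 : conv g h = convOne) :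
    f = h := by
  calc f = conv f convOne := (conv_one_right f).symm
    _ = conv f (conv g h) := by rw [h2]
    _ = conv (conv f g) h := (conv_assoc f g h).symm
    _ = conv convOne h := by rw [h1]
    _ = h := conv_one_left h

def mkRepr {c : C} {ι : Type} [Fintype ι] (f g : ι → C)
    (h : Coalgebra.comul (R := R) c = ∑ i, f i ⊗ₜ[R] g i) : Coalgebra.Repr R c ι :=
  ⟨Finset.univ, f, g, h.symm⟩


/-- representation of the comultiplication of a pure tensor -/
def tmulRepr {D : Type} [AddCommGroup D] [Module R D] [Coalgebra R D] {a : C} {b : D}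
    {ι κ : Type} (ra : Coalgebra.Repr R a ι) (rb : Coalgebra.Repr R b κ) :
    Coalgebra.Repr R (a ⊗ₜ[R] b) (ι × κ) where
  index := ra.index ×ˢ rb.index
  left := fun p => ra.left p.1 ⊗ₜ[R] rb.left p.2
  right := fun p => ra.right p.1 ⊗ₜ[R] rb.right p.2
  eq := by
    have : Coalgebra.comul (R := R) (a ⊗ₜ[R] b)
        = TensorProduct.tensorTensorTensorComm R C C D D
            (Coalgebra.comul (R := R) a ⊗ₜ[R] Coalgebra.comul (R := R) b) := rfl
    rw [this, ← ra.eq, ← rb.eq, TensorProduct.sum_tmul]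
    rw [map_sum, Finset.sum_product]
    refine Finset.sum_congr rfl fun i _ => ?_
    rw [TensorProduct.tmul_sum, map_sum]
    refine Finset.sum_congr rfl fun j _ => ?_
    exact TensorProduct.tensorTensorTensorComm_tmul ..

variable {H : Type} [Ring H] [HopfAlgebra R H]

/-- representation of the comultiplication of a product -/
def mulRepr {a b : H} {ι κ : Type} (ra : Coalgebra.Repr R a ι) (rb : Coalgebra.Repr R b κ) :
    Coalgebra.Repr R (a * b) (ι × κ) where
  index := ra.index ×ˢ rb.index
  left := fun p => ra.left p.1 * rb.left p.2
  right := fun p => ra.right p.1 * rb.right p.2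
  eq := by
    rw [Bialgebra.comul_mul, ← ra.eq, ← rb.eq, Finset.sum_mul_sum, Finset.sum_product]
    refine Finset.sum_congr rfl fun i _ => Finset.sum_congr rfl fun j _ => ?_
    rw [Algebra.TensorProduct.tmul_mul_tmul]

lemma antipode_one' : antipode (R := R) (1 : H) = 1 := by
  have h := mul_antipode_rTensor_comul_apply (R := R) (a := (1 : H))
  rw [Bialgebra.comul_one, Algebra.TensorProduct.one_def] at h
  simpa using h

lemma conv_S_id : conv (antipode (R := R)) (LinearMap.id) = (convOne : H →ₗ[R] H) := by
  ext a
  rw [conv_apply _ _ (ℛ R a)]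
  exact sum_antipode_mul_eq_algebraMap_counit (ℛ R a)

lemma conv_id_S : conv (LinearMap.id) (antipode (R := R)) = (convOne : H →ₗ[R] H) := by
  ext a
  rw [conv_apply _ _ (ℛ R a)]
  exact sum_mul_antipode_eq_algebraMap_counit (ℛ R a)

theorem antipode_mul' (a b : H) :
    antipode (R := R) (a * b) = antipode (R := R) b * antipode (R := R) a := by
  set F : H ⊗[R] H →ₗ[R] H := antipode (R := R) ∘ₗ LinearMap.mul' R H with hF
  set m : H ⊗[R] H →ₗ[R] H := LinearMap.mul' R H with hm
  set G : H ⊗[R] H →ₗ[R] H := LinearMap.mul' R H ∘ₗ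
    TensorProduct.map (antipode (R := R)) (antipode (R := R)) ∘ₗ
    (TensorProduct.comm R H H).toLinearMap with hG
  have h1 : conv F m = convOne := by
    apply TensorProduct.ext'
    intro x y
    rw [conv_apply _ _ (tmulRepr (ℛ R x) (ℛ R y))]
    have e1 : ∑ p ∈ (tmulRepr (ℛ R x) (ℛ R y)).index,
        F ((tmulRepr (ℛ R x) (ℛ R y)).left p) * m ((tmulRepr (ℛ R x) (ℛ R y)).right p)
        = ∑ p ∈ (mulRepr (ℛ R x) (ℛ R y)).index,
          antipode (R := R) ((mulRepr (ℛ R x) (ℛ R y)).left p) *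
            ((mulRepr (ℛ R x) (ℛ R y)).right p) := by
      refine Finset.sum_congr rfl fun p _ => ?_
      simp [hF, hm, tmulRepr, mulRepr]
    rw [e1, sum_antipode_mul_eq_algebraMap_counit (mulRepr (ℛ R x) (ℛ R y))]
    rw [convOne_apply]
    congr 1
    rw [Bialgebra.counit_mul]
    rw [TensorProduct.counit_tmul, smul_eq_mul, mul_comm]
  have h2 : conv m G = convOne := by
    apply TensorProduct.ext'
    intro x y
    rw [conv_apply _ _ (tmulRepr (ℛ R x) (ℛ R y))]
    have e1 : ∑ p ∈ (tmulRepr (ℛ R x) (ℛ R y)).index,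
        m ((tmulRepr (ℛ R x) (ℛ R y)).left p) * G ((tmulRepr (ℛ R x) (ℛ R y)).right p)
        = ∑ i ∈ (ℛ R x).index, ∑ j ∈ (ℛ R y).index,
          ((ℛ R x).left i * (ℛ R y).left j) *
            (antipode (R := R) ((ℛ R y).right j) * antipode (R := R) ((ℛ R x).right i)) := by
      refine Eq.trans (Finset.sum_product (s := (ℛ R x).index) (t := (ℛ R y).index)
        (f := fun p => m ((tmulRepr (ℛ R x) (ℛ R y)).left p)
          * G ((tmulRepr (ℛ R x) (ℛ R y)).right p))) ?_
      refine Finset.sum_congr rfl fun i _ => Finset.sum_congr rfl fun j _ => ?_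
      simp [hm, hG, tmulRepr]
    rw [e1]
    have e2 : ∀ i ∈ (ℛ R x).index, ∑ j ∈ (ℛ R y).index,
        ((ℛ R x).left i * (ℛ R y).left j) *
          (antipode (R := R) ((ℛ R y).right j) * antipode (R := R) ((ℛ R x).right i))
        = counit (R := R) y • ((ℛ R x).left i * antipode (R := R) ((ℛ R x).right i)) := by
      intro i _
      have : ∀ j ∈ (ℛ R y).index,
          ((ℛ R x).left i * (ℛ R y).left j) *
            (antipode (R := R) ((ℛ R y).right j) * antipode (R := R) ((ℛ R x).right i))
          = (ℛ R x).left i * (((ℛ R y).left j * antipode (R := R) ((ℛ R y).right j)) *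
              antipode (R := R) ((ℛ R x).right i)) := by
        intro j _
        simp [mul_assoc]
      rw [Finset.sum_congr rfl this, ← Finset.mul_sum, ← Finset.sum_mul,
        sum_mul_antipode_eq_smul (ℛ R y), smul_mul_assoc, one_mul, mul_smul_comm]
    rw [Finset.sum_congr rfl e2, ← Finset.smul_sum, sum_mul_antipode_eq_smul (ℛ R x),
      convOne_apply, smul_smul, Algebra.algebraMap_eq_smul_one]
    congr 1
  have hFG := conv_cancel F m G h1 h2
  have := congrArg (fun (φ : H ⊗[R] H →ₗ[R] H) => φ (a ⊗ₜ[R] b)) hFG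
  simpa [hF, hG, hm] using this

section Comatrix

variable {H : Type} [Ring H] [HopfAlgebra ℂ H]
variable {M : ℕ}

local notation "𝒮" => antipode (R := ℂ)

variable (ψ : Fin M → Fin M → H)

lemma sum_S_mul (hΔψ : ∀ i j, Coalgebra.comul (R := ℂ) (ψ i j) = ∑ k, ψ i k ⊗ₜ[ℂ] ψ k j)
    (hεψ : ∀ i j, Coalgebra.counit (R := ℂ) (ψ i j) = if i = j then 1 else 0)
    (i j : Fin M) :
    ∑ k, 𝒮 (ψ i k) * ψ k j = if i = j then (1 : H) else 0 := by
  have h := sum_antipode_mul_eq_algebraMap_counit (R := ℂ) (mkRepr _ _ (hΔψ i j))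
  rw [hεψ i j] at h
  simp only [mkRepr] at h
  rw [h]
  split <;> simp

lemma sum_mul_S (hΔψ : ∀ i j, Coalgebra.comul (R := ℂ) (ψ i j) = ∑ k, ψ i k ⊗ₜ[ℂ] ψ k j)
    (hεψ : ∀ i j, Coalgebra.counit (R := ℂ) (ψ i j) = if i = j then 1 else 0)
    (i j : Fin M) :
    ∑ k, ψ i k * 𝒮 (ψ k j) = if i = j then (1 : H) else 0 := by
  have h := sum_mul_antipode_eq_algebraMap_counit (R := ℂ) (mkRepr _ _ (hΔψ i j))
  rw [hεψ i j] at h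
  simp only [mkRepr] at h
  rw [h]
  split <;> simp

lemma comul_S (hΔψ : ∀ i j, Coalgebra.comul (R := ℂ) (ψ i j) = ∑ k, ψ i k ⊗ₜ[ℂ] ψ k j)
    (hεψ : ∀ i j, Coalgebra.counit (R := ℂ) (ψ i j) = if i = j then 1 else 0)
    (i j : Fin M) :
    Coalgebra.comul (R := ℂ) (𝒮 (ψ i j)) = ∑ k, 𝒮 (ψ k j) ⊗ₜ[ℂ] 𝒮 (ψ i k) := by
  set T : Fin M → Fin M → H ⊗[ℂ] H := fun i j => Coalgebra.comul (R := ℂ) (𝒮 (ψ i j)) with hT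
  set U : Fin M → Fin M → H ⊗[ℂ] H := fun i j => ∑ k, 𝒮 (ψ k j) ⊗ₜ[ℂ] 𝒮 (ψ i k) with hU
  set D : Fin M → Fin M → H ⊗[ℂ] H := fun i j => Coalgebra.comul (R := ℂ) (ψ i j) with hD
  have hA : ∀ i j, ∑ k, D i k * T k j = if i = j then 1 else 0 := by
    intro i j
    have : ∑ k, D i k * T k j
        = Coalgebra.comul (R := ℂ) (∑ k, ψ i k * 𝒮 (ψ k j)) := by
      rw [map_sum]
      exact Finset.sum_congr rfl fun k _ => (Bialgebra.comul_mul _ _).symm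
    rw [this, sum_mul_S ψ hΔψ hεψ]
    split <;> simp
  have hB : ∀ i j, ∑ k, U i k * D k j = if i = j then 1 else 0 := by
    intro i j
    have e1 : ∀ k, U i k * D k j
        = ∑ t, ∑ s, (𝒮 (ψ t k) * ψ k s) ⊗ₜ[ℂ] (𝒮 (ψ i t) * ψ s j) := by
      intro k
      show (∑ t, 𝒮 (ψ t k) ⊗ₜ[ℂ] 𝒮 (ψ i t)) * Coalgebra.comul (R := ℂ) (ψ k j) = _
      rw [hΔψ k j, Finset.sum_mul_sum]
      refine Finset.sum_congr rfl fun t _ => Finset.sum_congr rfl fun s _ => ?_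
      rw [Algebra.TensorProduct.tmul_mul_tmul]
    calc ∑ k, U i k * D k j
        = ∑ t, ∑ s, (∑ k, 𝒮 (ψ t k) * ψ k s) ⊗ₜ[ℂ] (𝒮 (ψ i t) * ψ s j) := by
          rw [Finset.sum_congr rfl fun k _ => e1 k, Finset.sum_comm]
          refine Finset.sum_congr rfl fun t _ => ?_
          rw [Finset.sum_comm]
          refine Finset.sum_congr rfl fun s _ => ?_
          rw [TensorProduct.sum_tmul]
      _ = ∑ t, (1 : H) ⊗ₜ[ℂ] (𝒮 (ψ i t) * ψ t j) := by
          refine Finset.sum_congr rfl fun t _ => ?_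
          calc ∑ s, (∑ k, 𝒮 (ψ t k) * ψ k s) ⊗ₜ[ℂ] (𝒮 (ψ i t) * ψ s j)
              = ∑ s, (if t = s then (1:H) else 0) ⊗ₜ[ℂ] (𝒮 (ψ i t) * ψ s j) := by
                refine Finset.sum_congr rfl fun s _ => ?_
                rw [sum_S_mul ψ hΔψ hεψ]
            _ = (1 : H) ⊗ₜ[ℂ] (𝒮 (ψ i t) * ψ t j) := by
                rw [Finset.sum_eq_single t]
                · simp
                · intro s _ hs
                  simp [Ne.symm hs]
                · simp
      _ = (1 : H) ⊗ₜ[ℂ] (∑ t, 𝒮 (ψ i t) * ψ t j) := by rw [TensorProduct.tmul_sum]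
      _ = if i = j then 1 else 0 := by
          rw [sum_S_mul ψ hΔψ hεψ]
          split <;> simp [Algebra.TensorProduct.one_def]
  have key : ∀ i j, T i j = U i j := by
    intro i j
    calc T i j = ∑ k, (if i = k then 1 else 0) * T k j := by
          simp only [ite_mul, one_mul, zero_mul, Finset.sum_ite_eq, Finset.mem_univ, if_true]
      _ = ∑ k, (∑ l, U i l * D l k) * T k j := by
          refine Finset.sum_congr rfl fun k _ => ?_; rw [hB]
      _ = ∑ k, ∑ l, U i l * (D l k * T k j) := by
          refine Finset.sum_congr rfl fun k _ => ?_
          rw [Finset.sum_mul]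
          exact Finset.sum_congr rfl fun l _ => mul_assoc _ _ _
      _ = ∑ l, U i l * (∑ k, D l k * T k j) := by
          rw [Finset.sum_comm]
          exact Finset.sum_congr rfl fun l _ => (Finset.mul_sum _ _ _).symm
      _ = ∑ l, U i l * (if l = j then 1 else 0) := by
          refine Finset.sum_congr rfl fun l _ => ?_; rw [hA]
      _ = U i j := by
          simp only [mul_ite, mul_one, mul_zero, Finset.sum_ite_eq', Finset.mem_univ, if_true]
  exact key i j

lemma sum_S_S2 (hΔψ : ∀ i j, Coalgebra.comul (R := ℂ) (ψ i j) = ∑ k, ψ i k ⊗ₜ[ℂ] ψ k j)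
    (hεψ : ∀ i j, Coalgebra.counit (R := ℂ) (ψ i j) = if i = j then 1 else 0)
    (i j : Fin M) :
    ∑ q, 𝒮 (ψ q j) * 𝒮 (𝒮 (ψ i q)) = if i = j then (1 : H) else 0 := by
  have h := congrArg 𝒮 (sum_S_mul ψ hΔψ hεψ i j)
  rw [map_sum] at h
  calc ∑ q, 𝒮 (ψ q j) * 𝒮 (𝒮 (ψ i q)) = ∑ q, 𝒮 (𝒮 (ψ i q) * ψ q j) := by
        exact Finset.sum_congr rfl fun q _ => (antipode_mul' _ _).symm
    _ = 𝒮 (if i = j then (1 : H) else 0) := h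
    _ = if i = j then 1 else 0 := by split <;> simp [antipode_one']

lemma sum_S2_S (hΔψ : ∀ i j, Coalgebra.comul (R := ℂ) (ψ i j) = ∑ k, ψ i k ⊗ₜ[ℂ] ψ k j)
    (hεψ : ∀ i j, Coalgebra.counit (R := ℂ) (ψ i j) = if i = j then 1 else 0)
    (i j : Fin M) :
    ∑ q, 𝒮 (𝒮 (ψ q j)) * 𝒮 (ψ i q) = if i = j then (1 : H) else 0 := by
  have h := congrArg 𝒮 (sum_mul_S ψ hΔψ hεψ i j)
  rw [map_sum] at h
  calc ∑ q, 𝒮 (𝒮 (ψ q j)) * 𝒮 (ψ i q) = ∑ q, 𝒮 (ψ i q * 𝒮 (ψ q j)) := by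
        exact Finset.sum_congr rfl fun q _ => (antipode_mul' _ _).symm
    _ = 𝒮 (if i = j then (1 : H) else 0) := h
    _ = if i = j then 1 else 0 := by split <;> simp [antipode_one']

variable (r : H →ₗ[ℂ] H →ₗ[ℂ] ℂ)

/-- the Drinfeld matrix -/
def uM (q p : Fin M) : ℂ := ∑ c, r (ψ c p) (𝒮 (ψ q c))

/-- the inverse Drinfeld matrix -/
def ubM (j q : Fin M) : ℂ := ∑ w, r (𝒮 (𝒮 (ψ w q))) (ψ j w)

/-- the (transpose-)inverse matrix `Z` of `ψᵀ` -/
def Zm (k n : Fin M) : H := ∑ p, ∑ q, (ubM ψ r n p * uM ψ r q k) • 𝒮 (ψ p q)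

section withR

variable (hr1 : ∀ (a b : H) (ι κ : Type) (_ : Fintype ι) (_ : Fintype κ)
      (a1 a2 : ι → H) (b1 b2 : κ → H),
      Coalgebra.comul (R := ℂ) a = ∑ t, a1 t ⊗ₜ[ℂ] a2 t →
      Coalgebra.comul (R := ℂ) b = ∑ s, b1 s ⊗ₜ[ℂ] b2 s →
      ∑ t, ∑ s, r (a1 t) (b1 s) • (a2 t * b2 s)
        = ∑ t, ∑ s, r (a2 t) (b2 s) • (b1 s * a1 t))
  (hr3 : ∀ (a b c : H) (ι : Type) (_ : Fintype ι) (a1 a2 : ι → H),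
      Coalgebra.comul (R := ℂ) a = ∑ t, a1 t ⊗ₜ[ℂ] a2 t →
      r a (b * c) = ∑ t, r (a1 t) c * r (a2 t) b)
  (hr3' : ∀ a : H, r a 1 = Coalgebra.counit (R := ℂ) a)
  (hΔψ : ∀ i j, Coalgebra.comul (R := ℂ) (ψ i j) = ∑ k, ψ i k ⊗ₜ[ℂ] ψ k j)
  (hεψ : ∀ i j, Coalgebra.counit (R := ℂ) (ψ i j) = if i = j then 1 else 0)

include hΔψ hεψ

include hr1 in
lemma T1 (q w : Fin M) :
    ∑ p, ∑ d, uM ψ r d p • (ψ p w * 𝒮 (ψ q d)) = uM ψ r q w • (1 : H) := by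
  have inst : ∀ c, ∑ p, ∑ d, r (ψ c p) (𝒮 (ψ d c)) • (ψ p w * 𝒮 (ψ q d))
      = ∑ p, ∑ d, r (ψ p w) (𝒮 (ψ q d)) • (𝒮 (ψ d c) * ψ c p) := fun c =>
    hr1 (ψ c w) (𝒮 (ψ q c)) (Fin M) (Fin M) inferInstance inferInstance
      (fun p => ψ c p) (fun p => ψ p w) (fun d => 𝒮 (ψ d c)) (fun d => 𝒮 (ψ q d))
      (hΔψ c w) (comul_S ψ hΔψ hεψ q c)
  calc ∑ p, ∑ d, uM ψ r d p • (ψ p w * 𝒮 (ψ q d))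
      = ∑ p, ∑ d, ∑ c, r (ψ c p) (𝒮 (ψ d c)) • (ψ p w * 𝒮 (ψ q d)) := by
        refine Finset.sum_congr rfl fun p _ => Finset.sum_congr rfl fun d _ => ?_
        rw [uM, Finset.sum_smul]
    _ = ∑ c, ∑ p, ∑ d, r (ψ c p) (𝒮 (ψ d c)) • (ψ p w * 𝒮 (ψ q d)) := by
        exact Eq.trans (Finset.sum_congr rfl fun p _ => Finset.sum_comm) Finset.sum_comm
    _ = ∑ c, ∑ p, ∑ d, r (ψ p w) (𝒮 (ψ q d)) • (𝒮 (ψ d c) * ψ c p) := by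
        exact Finset.sum_congr rfl fun c _ => inst c
    _ = ∑ p, ∑ d, r (ψ p w) (𝒮 (ψ q d)) • (∑ c, 𝒮 (ψ d c) * ψ c p) := by
        rw [Finset.sum_comm]
        refine Finset.sum_congr rfl fun p _ => ?_
        rw [Finset.sum_comm]
        refine Finset.sum_congr rfl fun d _ => ?_
        rw [← Finset.smul_sum]
    _ = ∑ p, ∑ d, r (ψ p w) (𝒮 (ψ q d)) • (if d = p then (1 : H) else 0) := by
        refine Finset.sum_congr rfl fun p _ => Finset.sum_congr rfl fun d _ => ?_
        rw [sum_S_mul ψ hΔψ hεψ]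
    _ = ∑ p, r (ψ p w) (𝒮 (ψ q p)) • (1 : H) := by
        refine Finset.sum_congr rfl fun p _ => ?_
        rw [Finset.sum_eq_single p]
        · simp
        · intro d _ hd; simp [hd]
        · simp
    _ = uM ψ r q w • (1 : H) := by rw [uM, Finset.sum_smul]

include hr1 in
lemma twist (e w : Fin M) :
    ∑ p, uM ψ r e p • ψ p w = ∑ q, uM ψ r q w • 𝒮 (𝒮 (ψ e q)) := by
  have h := fun q => congrArg (fun z => z * 𝒮 (𝒮 (ψ e q))) (T1 ψ r hr1 hΔψ hεψ q w)
  calc ∑ p, uM ψ r e p • ψ p w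
      = ∑ p, ∑ d, uM ψ r d p • (ψ p w * (if e = d then (1:H) else 0)) := by
        refine Finset.sum_congr rfl fun p _ => ?_
        rw [Finset.sum_eq_single e (fun d _ hd => by simp [Ne.symm hd]) (by simp)]
        simp
    _ = ∑ p, ∑ d, uM ψ r d p • (ψ p w * (∑ q, 𝒮 (ψ q d) * 𝒮 (𝒮 (ψ e q)))) := by
        refine Finset.sum_congr rfl fun p _ => Finset.sum_congr rfl fun d _ => ?_
        rw [sum_S_S2 ψ hΔψ hεψ]
    _ = ∑ p, ∑ d, ∑ q, uM ψ r d p • ((ψ p w * 𝒮 (ψ q d)) * 𝒮 (𝒮 (ψ e q))) := by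
        refine Finset.sum_congr rfl fun p _ => Finset.sum_congr rfl fun d _ => ?_
        rw [Finset.mul_sum, Finset.smul_sum]
        exact Finset.sum_congr rfl fun q _ => by rw [mul_assoc]
    _ = ∑ q, ∑ p, ∑ d, uM ψ r d p • ((ψ p w * 𝒮 (ψ q d)) * 𝒮 (𝒮 (ψ e q))) := by
        exact (Finset.sum_congr rfl fun p _ => Finset.sum_comm).trans Finset.sum_comm
    _ = ∑ q, (∑ p, ∑ d, uM ψ r d p • (ψ p w * 𝒮 (ψ q d))) * 𝒮 (𝒮 (ψ e q)) := by
        refine Finset.sum_congr rfl fun q _ => ?_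
        rw [Finset.sum_mul]
        refine Finset.sum_congr rfl fun p _ => ?_
        rw [Finset.sum_mul]
        exact Finset.sum_congr rfl fun d _ => (smul_mul_assoc _ _ _).symm
    _ = ∑ q, (uM ψ r q w • (1 : H)) * 𝒮 (𝒮 (ψ e q)) := by
        refine Finset.sum_congr rfl fun q _ => ?_
        rw [h q]
    _ = ∑ q, uM ψ r q w • 𝒮 (𝒮 (ψ e q)) := by
        refine Finset.sum_congr rfl fun q _ => ?_
        rw [smul_mul_assoc, one_mul]

include hr3 hr3' hr1 in
lemma ub_mul_u (j p : Fin M) :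
    ∑ q, ubM ψ r j q * uM ψ r q p = if j = p then (1 : ℂ) else 0 := by
  calc ∑ q, ubM ψ r j q * uM ψ r q p
      = ∑ q, ∑ w, uM ψ r q p * r (𝒮 (𝒮 (ψ w q))) (ψ j w) := by
        refine Finset.sum_congr rfl fun q _ => ?_
        rw [ubM, Finset.sum_mul]
        exact Finset.sum_congr rfl fun w _ => mul_comm _ _
    _ = ∑ w, ∑ q, uM ψ r q p * r (𝒮 (𝒮 (ψ w q))) (ψ j w) := Finset.sum_comm
    _ = ∑ w, r (∑ q, uM ψ r q p • 𝒮 (𝒮 (ψ w q))) (ψ j w) := by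
        refine Finset.sum_congr rfl fun w _ => ?_
        rw [map_sum, LinearMap.sum_apply]
        refine Finset.sum_congr rfl fun q _ => ?_
        rw [map_smul, LinearMap.smul_apply, smul_eq_mul]
    _ = ∑ w, r (∑ t, uM ψ r w t • ψ t p) (ψ j w) := by
        refine Finset.sum_congr rfl fun w _ => ?_
        rw [twist ψ r hr1 hΔψ hεψ w p]
    _ = ∑ w, ∑ t, uM ψ r w t * r (ψ t p) (ψ j w) := by
        refine Finset.sum_congr rfl fun w _ => ?_
        rw [map_sum, LinearMap.sum_apply]
        refine Finset.sum_congr rfl fun t _ => ?_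
        rw [map_smul, LinearMap.smul_apply, smul_eq_mul]
    _ = ∑ w, ∑ t, ∑ c, r (ψ c t) (𝒮 (ψ w c)) * r (ψ t p) (ψ j w) := by
        refine Finset.sum_congr rfl fun w _ => Finset.sum_congr rfl fun t _ => ?_
        rw [uM, Finset.sum_mul]
    _ = ∑ w, ∑ c, ∑ t, r (ψ c t) (𝒮 (ψ w c)) * r (ψ t p) (ψ j w) := by
        exact Finset.sum_congr rfl fun w _ => Finset.sum_comm
    _ = ∑ w, ∑ c, r (ψ c p) (ψ j w * 𝒮 (ψ w c)) := by
        refine Finset.sum_congr rfl fun w _ => Finset.sum_congr rfl fun c _ => ?_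
        exact (hr3 (ψ c p) (ψ j w) (𝒮 (ψ w c)) (Fin M) inferInstance
          (fun t => ψ c t) (fun t => ψ t p) (hΔψ c p)).symm
    _ = ∑ c, r (ψ c p) (∑ w, ψ j w * 𝒮 (ψ w c)) := by
        rw [Finset.sum_comm]
        exact Finset.sum_congr rfl fun c _ => (map_sum _ _ _).symm
    _ = ∑ c, r (ψ c p) (if j = c then (1 : H) else 0) := by
        refine Finset.sum_congr rfl fun c _ => ?_
        rw [sum_mul_S ψ hΔψ hεψ]
    _ = r (ψ j p) 1 := by
        rw [Finset.sum_eq_single j (fun c _ hc => by simp [Ne.symm hc]) (by simp)]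
        simp
    _ = if j = p then 1 else 0 := by rw [hr3', hεψ]

include hr3 hr3' hr1 in
lemma u_mul_ub (j p : Fin M) :
    ∑ q, uM ψ r j q * ubM ψ r q p = if j = p then (1 : ℂ) else 0 := by
  have hBA : (Matrix.of (ubM ψ r)) * (Matrix.of (uM ψ r)) = 1 := by
    ext a b
    rw [Matrix.mul_apply, Matrix.one_apply]
    simpa using ub_mul_u ψ r hr1 hr3 hr3' hΔψ hεψ a b
  have hAB := mul_eq_one_comm.mpr hBA
  have := congrFun (congrFun hAB j) p
  rw [Matrix.mul_apply, Matrix.one_apply] at this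
  simpa using this

include hr3 hr3' hr1 in
lemma star_eq (n w : Fin M) :
    (ψ n w : H) = ∑ e, ∑ q, (ubM ψ r n e * uM ψ r q w) • 𝒮 (𝒮 (ψ e q)) := by
  calc ψ n w = ∑ p, (if n = p then (1:ℂ) else 0) • ψ p w := by
        rw [Finset.sum_eq_single n (fun c _ hc => by simp [Ne.symm hc]) (by simp)]
        simp
    _ = ∑ p, (∑ e, ubM ψ r n e * uM ψ r e p) • ψ p w := by
        refine Finset.sum_congr rfl fun p _ => ?_
        rw [ub_mul_u ψ r hr1 hr3 hr3' hΔψ hεψ]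
    _ = ∑ p, ∑ e, (ubM ψ r n e * uM ψ r e p) • ψ p w := by
        exact Finset.sum_congr rfl fun p _ => Finset.sum_smul
    _ = ∑ e, ∑ p, (ubM ψ r n e * uM ψ r e p) • ψ p w := Finset.sum_comm
    _ = ∑ e, ubM ψ r n e • (∑ p, uM ψ r e p • ψ p w) := by
        refine Finset.sum_congr rfl fun e _ => ?_
        rw [Finset.smul_sum]
        exact Finset.sum_congr rfl fun p _ => mul_smul _ _ _
    _ = ∑ e, ubM ψ r n e • (∑ q, uM ψ r q w • 𝒮 (𝒮 (ψ e q))) := by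
        refine Finset.sum_congr rfl fun e _ => ?_
        rw [twist ψ r hr1 hΔψ hεψ]
    _ = ∑ e, ∑ q, (ubM ψ r n e * uM ψ r q w) • 𝒮 (𝒮 (ψ e q)) := by
        refine Finset.sum_congr rfl fun e _ => ?_
        rw [Finset.smul_sum]
        exact Finset.sum_congr rfl fun q _ => smul_smul _ _ _

include hr3 hr3' hr1 in
lemma ubar_twist (n p : Fin M) :
    ∑ k, ubM ψ r k p • ψ n k = ∑ e, ubM ψ r n e • 𝒮 (𝒮 (ψ e p)) := by
  calc ∑ k, ubM ψ r k p • ψ n k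
      = ∑ k, ubM ψ r k p • (∑ e, ∑ q, (ubM ψ r n e * uM ψ r q k) • 𝒮 (𝒮 (ψ e q))) := by
        refine Finset.sum_congr rfl fun k _ => ?_
        rw [← star_eq ψ r hr1 hr3 hr3' hΔψ hεψ n k]
    _ = ∑ k, ∑ e, ∑ q, (ubM ψ r n e * (uM ψ r q k * ubM ψ r k p)) • 𝒮 (𝒮 (ψ e q)) := by
        refine Finset.sum_congr rfl fun k _ => ?_
        rw [Finset.smul_sum]
        refine Finset.sum_congr rfl fun e _ => ?_
        rw [Finset.smul_sum]
        refine Finset.sum_congr rfl fun q _ => ?_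
        rw [smul_smul]
        ring_nf
    _ = ∑ e, ∑ q, ∑ k, (ubM ψ r n e * (uM ψ r q k * ubM ψ r k p)) • 𝒮 (𝒮 (ψ e q)) := by
        exact Finset.sum_comm.trans (Finset.sum_congr rfl fun _ _ => Finset.sum_comm)
    _ = ∑ e, ∑ q, (ubM ψ r n e * (∑ k, uM ψ r q k * ubM ψ r k p)) • 𝒮 (𝒮 (ψ e q)) := by
        refine Finset.sum_congr rfl fun e _ => Finset.sum_congr rfl fun q _ => ?_
        rw [Finset.mul_sum, Finset.sum_smul]
    _ = ∑ e, ∑ q, (ubM ψ r n e * (if q = p then (1:ℂ) else 0)) • 𝒮 (𝒮 (ψ e q)) := by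
        refine Finset.sum_congr rfl fun e _ => Finset.sum_congr rfl fun q _ => ?_
        rw [u_mul_ub ψ r hr1 hr3 hr3' hΔψ hεψ]
    _ = ∑ e, ubM ψ r n e • 𝒮 (𝒮 (ψ e p)) := by
        refine Finset.sum_congr rfl fun e _ => ?_
        rw [Finset.sum_eq_single p (fun q _ hq => by simp [hq]) (by simp)]
        simp

include hr3 hr3' hr1 in
lemma Z1 (m n : Fin M) :
    ∑ k, ψ k m * Zm ψ r k n = if n = m then (1 : H) else 0 := by
  calc ∑ k, ψ k m * Zm ψ r k n
      = ∑ k, ∑ p, ∑ q, (ubM ψ r n p * uM ψ r q k) • (ψ k m * 𝒮 (ψ p q)) := by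
        refine Finset.sum_congr rfl fun k _ => ?_
        rw [Zm, Finset.mul_sum]
        refine Finset.sum_congr rfl fun p _ => ?_
        rw [Finset.mul_sum]
        exact Finset.sum_congr rfl fun q _ => mul_smul_comm _ _ _
    _ = ∑ p, ∑ q, ∑ k, (ubM ψ r n p * uM ψ r q k) • (ψ k m * 𝒮 (ψ p q)) := by
        exact Finset.sum_comm.trans (Finset.sum_congr rfl fun _ _ => Finset.sum_comm)
    _ = ∑ p, ∑ q, ubM ψ r n p • ((∑ k, uM ψ r q k • ψ k m) * 𝒮 (ψ p q)) := by
        refine Finset.sum_congr rfl fun p _ => Finset.sum_congr rfl fun q _ => ?_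
        rw [Finset.sum_mul, Finset.smul_sum]
        refine Finset.sum_congr rfl fun k _ => ?_
        rw [smul_mul_assoc, smul_smul]
    _ = ∑ p, ∑ q, ubM ψ r n p • ((∑ e, uM ψ r e m • 𝒮 (𝒮 (ψ q e))) * 𝒮 (ψ p q)) := by
        refine Finset.sum_congr rfl fun p _ => Finset.sum_congr rfl fun q _ => ?_
        rw [twist ψ r hr1 hΔψ hεψ]
    _ = ∑ p, ∑ q, ∑ e, (ubM ψ r n p * uM ψ r e m) • (𝒮 (𝒮 (ψ q e)) * 𝒮 (ψ p q)) := by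
        refine Finset.sum_congr rfl fun p _ => Finset.sum_congr rfl fun q _ => ?_
        rw [Finset.sum_mul, Finset.smul_sum]
        refine Finset.sum_congr rfl fun e _ => ?_
        rw [smul_mul_assoc, smul_smul]
    _ = ∑ p, ∑ e, (ubM ψ r n p * uM ψ r e m) • (∑ q, 𝒮 (𝒮 (ψ q e)) * 𝒮 (ψ p q)) := by
        refine Finset.sum_congr rfl fun p _ => ?_
        refine Finset.sum_comm.trans ?_
        refine Finset.sum_congr rfl fun e _ => ?_
        rw [Finset.smul_sum]
    _ = ∑ p, ∑ e, (ubM ψ r n p * uM ψ r e m) • (if p = e then (1:H) else 0) := by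
        refine Finset.sum_congr rfl fun p _ => Finset.sum_congr rfl fun e _ => ?_
        rw [sum_S2_S ψ hΔψ hεψ]
    _ = ∑ p, (ubM ψ r n p * uM ψ r p m) • (1:H) := by
        refine Finset.sum_congr rfl fun p _ => ?_
        rw [Finset.sum_eq_single p (fun e _ he => by simp [Ne.symm he]) (by simp)]
        simp
    _ = (∑ p, ubM ψ r n p * uM ψ r p m) • (1:H) := Finset.sum_smul.symm
    _ = if n = m then (1:H) else 0 := by
        rw [ub_mul_u ψ r hr1 hr3 hr3' hΔψ hεψ]
        split <;> simp

include hr3 hr3' hr1 in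
lemma Z2 (m n : Fin M) :
    ∑ k, Zm ψ r m k * ψ n k = if n = m then (1 : H) else 0 := by
  calc ∑ k, Zm ψ r m k * ψ n k
      = ∑ k, ∑ p, ∑ q, (ubM ψ r k p * uM ψ r q m) • (𝒮 (ψ p q) * ψ n k) := by
        refine Finset.sum_congr rfl fun k _ => ?_
        rw [Zm, Finset.sum_mul]
        refine Finset.sum_congr rfl fun p _ => ?_
        rw [Finset.sum_mul]
        exact Finset.sum_congr rfl fun q _ => smul_mul_assoc _ _ _
    _ = ∑ p, ∑ q, ∑ k, (ubM ψ r k p * uM ψ r q m) • (𝒮 (ψ p q) * ψ n k) := by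
        exact Finset.sum_comm.trans (Finset.sum_congr rfl fun _ _ => Finset.sum_comm)
    _ = ∑ p, ∑ q, uM ψ r q m • (𝒮 (ψ p q) * (∑ k, ubM ψ r k p • ψ n k)) := by
        refine Finset.sum_congr rfl fun p _ => Finset.sum_congr rfl fun q _ => ?_
        rw [Finset.mul_sum, Finset.smul_sum]
        refine Finset.sum_congr rfl fun k _ => ?_
        rw [mul_smul_comm, smul_smul, mul_comm (ubM ψ r k p)]
    _ = ∑ p, ∑ q, uM ψ r q m • (𝒮 (ψ p q) * (∑ e, ubM ψ r n e • 𝒮 (𝒮 (ψ e p)))) := by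
        refine Finset.sum_congr rfl fun p _ => Finset.sum_congr rfl fun q _ => ?_
        rw [ubar_twist ψ r hr1 hr3 hr3' hΔψ hεψ]
    _ = ∑ p, ∑ q, ∑ e, (uM ψ r q m * ubM ψ r n e) • (𝒮 (ψ p q) * 𝒮 (𝒮 (ψ e p))) := by
        refine Finset.sum_congr rfl fun p _ => Finset.sum_congr rfl fun q _ => ?_
        rw [Finset.mul_sum, Finset.smul_sum]
        refine Finset.sum_congr rfl fun e _ => ?_
        rw [mul_smul_comm, smul_smul]
    _ = ∑ q, ∑ e, (uM ψ r q m * ubM ψ r n e) • (∑ p, 𝒮 (ψ p q) * 𝒮 (𝒮 (ψ e p))) := by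
        refine Finset.sum_comm.trans ?_
        refine Finset.sum_congr rfl fun q _ => ?_
        refine Finset.sum_comm.trans ?_
        refine Finset.sum_congr rfl fun e _ => ?_
        rw [Finset.smul_sum]
    _ = ∑ q, ∑ e, (uM ψ r q m * ubM ψ r n e) • (if e = q then (1:H) else 0) := by
        refine Finset.sum_congr rfl fun q _ => Finset.sum_congr rfl fun e _ => ?_
        rw [sum_S_S2 ψ hΔψ hεψ]
    _ = ∑ q, (uM ψ r q m * ubM ψ r n q) • (1:H) := by
        refine Finset.sum_congr rfl fun q _ => ?_
        rw [Finset.sum_eq_single q (fun e _ he => by simp [he]) (by simp)]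
        simp
    _ = (∑ q, ubM ψ r n q * uM ψ r q m) • (1:H) := by
        rw [← Finset.sum_smul]
        congr 1
        exact Finset.sum_congr rfl fun q _ => mul_comm _ _
    _ = if n = m then (1:H) else 0 := by
        rw [ub_mul_u ψ r hr1 hr3 hr3' hΔψ hεψ]
        split <;> simp

end withR

end Comatrix

section Helpers

variable {H : Type} [Ring H] [Algebra ℂ H] {M : ℕ}

lemma helperA {ι' : Type} [Fintype ι'] (ψ Z : Fin M → Fin M → H)
    (hZ : ∀ m n, ∑ k, ψ k m * Z k n = if n = m then (1 : H) else 0)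
    (c : ι' → Fin M → ℂ) (A : ι' → H) (m' : Fin M) :
    ∑ k, (∑ t, ∑ m, (c t m) • (A t * ψ k m)) * Z k m' = ∑ t, (c t m') • A t := by
  calc ∑ k, (∑ t, ∑ m, (c t m) • (A t * ψ k m)) * Z k m'
      = ∑ k, ∑ t, ∑ m, (c t m) • ((A t * ψ k m) * Z k m') := by
        refine Finset.sum_congr rfl fun k _ => ?_
        rw [Finset.sum_mul]
        refine Finset.sum_congr rfl fun t _ => ?_
        rw [Finset.sum_mul]
        exact Finset.sum_congr rfl fun m _ => smul_mul_assoc _ _ _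
    _ = ∑ t, ∑ m, ∑ k, (c t m) • ((A t * ψ k m) * Z k m') := by
        exact Finset.sum_comm.trans (Finset.sum_congr rfl fun _ _ => Finset.sum_comm)
    _ = ∑ t, ∑ m, (c t m) • (A t * (∑ k, ψ k m * Z k m')) := by
        refine Finset.sum_congr rfl fun t _ => Finset.sum_congr rfl fun m _ => ?_
        rw [Finset.mul_sum, Finset.smul_sum]
        exact Finset.sum_congr rfl fun k _ => by rw [mul_assoc]
    _ = ∑ t, ∑ m, (c t m) • (A t * (if m' = m then (1:H) else 0)) := by
        refine Finset.sum_congr rfl fun t _ => Finset.sum_congr rfl fun m _ => ?_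
        rw [hZ]
    _ = ∑ t, (c t m') • A t := by
        refine Finset.sum_congr rfl fun t _ => ?_
        rw [Finset.sum_eq_single m' (fun m _ hm => by simp [Ne.symm hm]) (by simp)]
        simp

lemma helperB (B : Fin M → H) (π' ψ' : Fin M → Fin M → H) (c : Fin M → Fin M → ℂ)
    (j i : Fin M) (hB : ∀ n, ∑ l, B l * π' l n = if j = n then (1 : H) else 0) :
    ∑ l, B l * (∑ n, ∑ m, c n m • (π' l n * ψ' i m)) = ∑ m, c j m • ψ' i m := by
  calc ∑ l, B l * (∑ n, ∑ m, c n m • (π' l n * ψ' i m))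
      = ∑ l, ∑ n, ∑ m, c n m • ((B l * π' l n) * ψ' i m) := by
        refine Finset.sum_congr rfl fun l _ => ?_
        rw [Finset.mul_sum]
        refine Finset.sum_congr rfl fun n _ => ?_
        rw [Finset.mul_sum]
        refine Finset.sum_congr rfl fun m _ => ?_
        rw [mul_smul_comm, mul_assoc]
    _ = ∑ n, ∑ m, c n m • ((∑ l, B l * π' l n) * ψ' i m) := by
        refine Finset.sum_comm.trans (Finset.sum_congr rfl fun n _ =>
          Finset.sum_comm.trans (Finset.sum_congr rfl fun m _ => ?_))
        rw [Finset.sum_mul, Finset.smul_sum]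
    _ = ∑ n, ∑ m, c n m • ((if j = n then (1:H) else 0) * ψ' i m) := by
        refine Finset.sum_congr rfl fun n _ => Finset.sum_congr rfl fun m _ => ?_
        rw [hB]
    _ = ∑ m, c j m • ψ' i m := by
        rw [Finset.sum_eq_single j (fun n _ hn => by simp [Ne.symm hn]) (by simp)]
        simp

lemma helperC (P : Fin M → H) (Q : Fin M → Fin M → H) (R : Fin M → H)
    (d : Fin M → Fin M → ℂ) :
    ∑ k, P k * (∑ a, ∑ b, (d a b) • (Q k a * R b))
      = ∑ a, ∑ b, (d a b) • ((∑ k, P k * Q k a) * R b) := by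
  calc ∑ k, P k * (∑ a, ∑ b, (d a b) • (Q k a * R b))
      = ∑ k, ∑ a, ∑ b, (d a b) • ((P k * Q k a) * R b) := by
        refine Finset.sum_congr rfl fun k _ => ?_
        rw [Finset.mul_sum]
        refine Finset.sum_congr rfl fun a _ => ?_
        rw [Finset.mul_sum]
        refine Finset.sum_congr rfl fun b _ => ?_
        rw [mul_smul_comm, mul_assoc]
    _ = ∑ a, ∑ b, ∑ k, (d a b) • ((P k * Q k a) * R b) := by
        exact Finset.sum_comm.trans (Finset.sum_congr rfl fun _ _ => Finset.sum_comm)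
    _ = ∑ a, ∑ b, (d a b) • ((∑ k, P k * Q k a) * R b) := by
        refine Finset.sum_congr rfl fun a _ => Finset.sum_congr rfl fun b _ => ?_
        rw [Finset.sum_mul, Finset.smul_sum]

lemma helperD {ι'' : Type} [Fintype ι''] (d : Fin M → Fin M → ℂ) (c : Fin M → ι'' → ℂ)
    (A : ι'' → H) (R : Fin M → H) :
    ∑ m', ∑ j, d j m' • ((∑ n, c m' n • A n) * R j)
      = ∑ j, ∑ n, (∑ m', d j m' * c m' n) • (A n * R j) := by
  calc ∑ m', ∑ j, d j m' • ((∑ n, c m' n • A n) * R j)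
      = ∑ m', ∑ j, ∑ n, (d j m' * c m' n) • (A n * R j) := by
        refine Finset.sum_congr rfl fun m' _ => Finset.sum_congr rfl fun j _ => ?_
        rw [Finset.sum_mul, Finset.smul_sum]
        refine Finset.sum_congr rfl fun n _ => ?_
        rw [smul_mul_assoc, smul_smul]
    _ = ∑ j, ∑ n, ∑ m', (d j m' * c m' n) • (A n * R j) := by
        exact Finset.sum_comm.trans (Finset.sum_congr rfl fun _ _ => Finset.sum_comm)
    _ = ∑ j, ∑ n, (∑ m', d j m' * c m' n) • (A n * R j) := by
        refine Finset.sum_congr rfl fun j _ => Finset.sum_congr rfl fun n _ => ?_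
        rw [Finset.sum_smul]

lemma helperE (P : Fin M → H) (Q : Fin M → H) (R : Fin M → Fin M → H)
    (d : Fin M → Fin M → ℂ) :
    ∑ l, (∑ a, ∑ b, (d a b) • (Q a * R b l)) * P l
      = ∑ a, ∑ b, (d a b) • (Q a * (∑ l, R b l * P l)) := by
  calc ∑ l, (∑ a, ∑ b, (d a b) • (Q a * R b l)) * P l
      = ∑ l, ∑ a, ∑ b, (d a b) • (Q a * (R b l * P l)) := by
        refine Finset.sum_congr rfl fun l _ => ?_
        rw [Finset.sum_mul]
        refine Finset.sum_congr rfl fun a _ => ?_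
        rw [Finset.sum_mul]
        refine Finset.sum_congr rfl fun b _ => ?_
        rw [smul_mul_assoc, mul_assoc]
    _ = ∑ a, ∑ b, ∑ l, (d a b) • (Q a * (R b l * P l)) := by
        exact Finset.sum_comm.trans (Finset.sum_congr rfl fun _ _ => Finset.sum_comm)
    _ = ∑ a, ∑ b, (d a b) • (Q a * (∑ l, R b l * P l)) := by
        refine Finset.sum_congr rfl fun a _ => Finset.sum_congr rfl fun b _ => ?_
        rw [Finset.mul_sum, Finset.smul_sum]

lemma helperF (d c : Fin M → Fin M → ℂ) (Q R : Fin M → H) :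
    ∑ m, ∑ j, d j m • (Q m * (∑ m', c m' j • R m'))
      = ∑ m, ∑ m', (∑ j, c m' j * d j m) • (Q m * R m') := by
  calc ∑ m, ∑ j, d j m • (Q m * (∑ m', c m' j • R m'))
      = ∑ m, ∑ j, ∑ m', (c m' j * d j m) • (Q m * R m') := by
        refine Finset.sum_congr rfl fun m _ => Finset.sum_congr rfl fun j _ => ?_
        rw [Finset.mul_sum, Finset.smul_sum]
        refine Finset.sum_congr rfl fun m' _ => ?_
        rw [mul_smul_comm, smul_smul, mul_comm (d j m)]
    _ = ∑ m, ∑ m', ∑ j, (c m' j * d j m) • (Q m * R m') := by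
        exact Finset.sum_congr rfl fun _ _ => Finset.sum_comm
    _ = ∑ m, ∑ m', (∑ j, c m' j * d j m) • (Q m * R m') := by
        refine Finset.sum_congr rfl fun m _ => Finset.sum_congr rfl fun m' _ => ?_
        rw [Finset.sum_smul]

end Helpers

end Stmt12Aux
end


/-- in the setting of the construction theorem, the operators
`∂_i(a) = a₍₁₎ χ^k(a₍₂₎) (χ⁻¹)_{jk} S(π^j_i)` map `X` into `X`. -/
theorem stmt12
    {H : Type} [Ring H] [HopfAlgebra ℂ H]
    -- universal r-form
    (r : H →ₗ[ℂ] H →ₗ[ℂ] ℂ)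
    (hr1 : ∀ (a b : H) (ι κ : Type) (_ : Fintype ι) (_ : Fintype κ)
      (a1 a2 : ι → H) (b1 b2 : κ → H),
      Coalgebra.comul (R := ℂ) a = ∑ t, a1 t ⊗ₜ[ℂ] a2 t →
      Coalgebra.comul (R := ℂ) b = ∑ s, b1 s ⊗ₜ[ℂ] b2 s →
      ∑ t, ∑ s, r (a1 t) (b1 s) • (a2 t * b2 s)
        = ∑ t, ∑ s, r (a2 t) (b2 s) • (b1 s * a1 t))
    (hr2 : ∀ (a b c : H) (κ : Type) (_ : Fintype κ) (c1 c2 : κ → H),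
      Coalgebra.comul (R := ℂ) c = ∑ s, c1 s ⊗ₜ[ℂ] c2 s →
      r (a * b) c = ∑ s, r a (c1 s) * r b (c2 s))
    (hr2' : ∀ c : H, r 1 c = Coalgebra.counit (R := ℂ) c)
    (hr3 : ∀ (a b c : H) (ι : Type) (_ : Fintype ι) (a1 a2 : ι → H),
      Coalgebra.comul (R := ℂ) a = ∑ t, a1 t ⊗ₜ[ℂ] a2 t →
      r a (b * c) = ∑ t, r (a1 t) c * r (a2 t) b)
    (hr3' : ∀ a : H, r a 1 = Coalgebra.counit (R := ℂ) a)
    -- X: a left coideal subalgebra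
    (X : Subalgebra ℂ H)
    (comulX : X →ₗ[ℂ] H ⊗[ℂ] X)
    (hcomulX : ∀ a : X,
      (TensorProduct.map (LinearMap.id) X.val.toLinearMap) (comulX a)
        = Coalgebra.comul (R := ℂ) (a : H))
    -- invertibility-closure property of X
    (hclosure : ∀ (n : ℕ) (x y : Fin n → Fin n → H),
      (∀ i j, x i j ∈ X) →
      (∀ i j, ∑ k, x i k * y k j = if i = j then (1 : H) else 0) →
      (∀ i j, ∑ k, y i k * x k j = if i = j then (1 : H) else 0) →
      ∀ i j, y i j ∈ X)
    -- e^i and b^i with their matrix coefficients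
    {M : ℕ} (e bb : Fin M → X) (π ψ : Fin M → Fin M → H)
    (hπ : ∀ i, comulX (e i) = ∑ j, π i j ⊗ₜ[ℂ] e j)
    (hΔπ : ∀ i j, Coalgebra.comul (R := ℂ) (π i j) = ∑ k, π i k ⊗ₜ[ℂ] π k j)
    (hεπ : ∀ i j, Coalgebra.counit (R := ℂ) (π i j) = if i = j then 1 else 0)
    (hψ : ∀ i, comulX (bb i) = ∑ j, ψ i j ⊗ₜ[ℂ] bb j)
    (hΔψ : ∀ i j, Coalgebra.comul (R := ℂ) (ψ i j) = ∑ k, ψ i k ⊗ₜ[ℂ] ψ k j)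
    (hεψ : ∀ i j, Coalgebra.counit (R := ℂ) (ψ i j) = if i = j then 1 else 0)
    -- covariant algebra endomorphism ν of X
    (ν : X →ₐ[ℂ] X)
    (hν : ∀ a : X, comulX (ν a) = (TensorProduct.map LinearMap.id ν.toLinearMap) (comulX a))
    -- the functionals χ^i and the invertible matrix χ
    (χ : Fin M → X → ℂ)
    (hχ : ∀ i (a : X), χ i a =
      r ((bb i : H)) ((ν a : H))
        - Coalgebra.counit (R := ℂ) ((bb i : H)) * Coalgebra.counit (R := ℂ) ((a : H)))
    (χinv : Fin M → Fin M → ℂ)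
    (hχinv1 : ∀ i j, ∑ k, χ i (e k) * χinv k j = if i = j then 1 else 0)
    (hχinv2 : ∀ i j, ∑ k, χinv i k * χ k (e j) = if i = j then 1 else 0)
    :
    ∀ (a : X) (i : Fin M) (ι : Type) (_ : Fintype ι) (a1 : ι → H) (a2 : ι → X),
      comulX a = ∑ t, a1 t ⊗ₜ[ℂ] a2 t →
      (∑ t, ∑ j, ∑ k, (χ k (a2 t) * χinv j k) •
          (a1 t * HopfAlgebra.antipode (R := ℂ) (π j i))) ∈ X := by
  intro a i ι instι a1 a2 hrep
  classical
  set Z : Fin M → Fin M → H := Stmt12Aux.Zm ψ r with hZdef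
  have hZ1 : ∀ m n, ∑ k, ψ k m * Z k n = if n = m then (1:H) else 0 :=
    fun m n => Stmt12Aux.Z1 ψ r hr1 hr3 hr3' hΔψ hεψ m n
  have hZ2 : ∀ m n, ∑ k, Z m k * ψ n k = if n = m then (1:H) else 0 :=
    fun m n => Stmt12Aux.Z2 ψ r hr1 hr3 hr3' hΔψ hεψ m n
  have hπ1 : ∀ i' j, ∑ k, antipode (R := ℂ) (π i' k) * π k j = if i' = j then (1:H) else 0 :=
    Stmt12Aux.sum_S_mul π hΔπ hεπ
  have hπ2 : ∀ i' j, ∑ k, π i' k * antipode (R := ℂ) (π k j) = if i' = j then (1:H) else 0 :=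
    Stmt12Aux.sum_mul_S π hΔπ hεπ
  have hΔbb : ∀ k, Coalgebra.comul (R := ℂ) ((bb k : H)) = ∑ m, ψ k m ⊗ₜ[ℂ] ((bb m : H)) := by
    intro k
    rw [← hcomulX (bb k), hψ k, map_sum]
    exact Finset.sum_congr rfl fun m _ => by simp
  -- CORE MEMBERSHIP LEMMA
  have hVmem : ∀ (x : X) (ι' : Type) (instι' : Fintype ι') (x1 : ι' → H) (x2 : ι' → X),
      comulX x = ∑ t, x1 t ⊗ₜ[ℂ] x2 t →
      ∀ k, (∑ t, ∑ m, (χ m (x2 t)) • (x1 t * ψ k m)) ∈ X := by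
    intro x ι' instι' x1 x2 hx k
    have hΔx : Coalgebra.comul (R := ℂ) ((x : H)) = ∑ t, x1 t ⊗ₜ[ℂ] ((x2 t : H)) := by
      rw [← hcomulX x, hx, map_sum]
      exact Finset.sum_congr rfl fun t _ => by simp
    have hΔνx : Coalgebra.comul (R := ℂ) ((ν x : H))
        = ∑ t, x1 t ⊗ₜ[ℂ] ((ν (x2 t) : H)) := by
      have h' : comulX (ν x) = ∑ t, x1 t ⊗ₜ[ℂ] (ν (x2 t)) := by
        rw [hν x, hx, map_sum]
        exact Finset.sum_congr rfl fun t _ => by simp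
      rw [← hcomulX (ν x), h', map_sum]
      exact Finset.sum_congr rfl fun t _ => by simp
    have hb := hr1 ((bb k : H)) ((ν x : H)) (Fin M) ι' inferInstance instι'
      (fun m => ψ k m) (fun m => ((bb m : H))) x1 (fun t => ((ν (x2 t) : H)))
      (hΔbb k) hΔνx
    have hmem1 : (∑ m, ∑ t, r ((bb m : H)) ((ν (x2 t) : H)) • (x1 t * ψ k m)) ∈ X := by
      rw [← hb]
      exact sum_mem fun m _ => sum_mem fun t _ =>
        X.smul_mem (X.mul_mem (bb m).2 (ν (x2 t)).2) _
    have hbbk : ∑ m, Coalgebra.counit (R := ℂ) ((bb m : H)) • ψ k m = ((bb k : H)) :=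
      Stmt12Aux.repr_smul_right (Stmt12Aux.mkRepr _ _ (hΔbb k))
    have hxcol : ∑ t, Coalgebra.counit (R := ℂ) ((x2 t : H)) • x1 t = ((x : H)) :=
      Stmt12Aux.repr_smul_right (Stmt12Aux.mkRepr _ _ hΔx)
    have split : (∑ t, ∑ m, (χ m (x2 t)) • (x1 t * ψ k m))
        = (∑ m, ∑ t, r ((bb m : H)) ((ν (x2 t) : H)) • (x1 t * ψ k m))
          - (x : H) * ((bb k : H)) := by
      have e1 : (∑ t, ∑ m, (χ m (x2 t)) • (x1 t * ψ k m))
          = (∑ t, ∑ m, r ((bb m : H)) ((ν (x2 t) : H)) • (x1 t * ψ k m))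
            - ∑ t, ∑ m, (Coalgebra.counit (R := ℂ) ((bb m : H))
                * Coalgebra.counit (R := ℂ) ((x2 t : H))) • (x1 t * ψ k m) := by
        rw [← Finset.sum_sub_distrib]
        refine Finset.sum_congr rfl fun t _ => ?_
        rw [← Finset.sum_sub_distrib]
        refine Finset.sum_congr rfl fun m _ => ?_
        rw [hχ, sub_smul]
      have e2 : ∑ t, ∑ m, (Coalgebra.counit (R := ℂ) ((bb m : H))
            * Coalgebra.counit (R := ℂ) ((x2 t : H))) • (x1 t * ψ k m)
          = (x : H) * ((bb k : H)) := by
        calc ∑ t, ∑ m, (Coalgebra.counit (R := ℂ) ((bb m : H))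
              * Coalgebra.counit (R := ℂ) ((x2 t : H))) • (x1 t * ψ k m)
            = ∑ t, Coalgebra.counit (R := ℂ) ((x2 t : H))
                • (x1 t * ∑ m, Coalgebra.counit (R := ℂ) ((bb m : H)) • ψ k m) := by
              refine Finset.sum_congr rfl fun t _ => ?_
              rw [Finset.mul_sum, Finset.smul_sum]
              refine Finset.sum_congr rfl fun m _ => ?_
              rw [mul_smul_comm, smul_smul, mul_comm (Coalgebra.counit (R := ℂ) ((bb m : H)))]
          _ = ∑ t, Coalgebra.counit (R := ℂ) ((x2 t : H)) • (x1 t * ((bb k : H))) := by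
              rw [hbbk]
          _ = (∑ t, Coalgebra.counit (R := ℂ) ((x2 t : H)) • x1 t) * ((bb k : H)) := by
              rw [Finset.sum_mul]
              exact Finset.sum_congr rfl fun t _ => (smul_mul_assoc _ _ _).symm
          _ = (x : H) * ((bb k : H)) := by rw [hxcol]
      rw [e1, e2, Finset.sum_comm]
    rw [split]
    exact sub_mem hmem1 (X.mul_mem x.2 (bb k).2)
  -- W ∈ X
  have hWmem : ∀ l k, (∑ n, ∑ m, (χ m (e n)) • (π l n * ψ k m)) ∈ X :=
    fun l k => hVmem (e l) (Fin M) inferInstance (π l) e (hπ l) k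
  -- W * y = 1
  have hWy : ∀ l i', ∑ k, (∑ n, ∑ m, (χ m (e n)) • (π l n * ψ k m))
      * (∑ m, ∑ j, (χinv j m) • (Z k m * antipode (R := ℂ) (π j i')))
      = if l = i' then (1:H) else 0 := by
    intro l i'
    calc ∑ k, (∑ n, ∑ m, (χ m (e n)) • (π l n * ψ k m))
          * (∑ m, ∑ j, (χinv j m) • (Z k m * antipode (R := ℂ) (π j i')))
        = ∑ m', ∑ j, (χinv j m') • ((∑ k, (∑ n, ∑ m, (χ m (e n)) • (π l n * ψ k m)) * Z k m')
            * antipode (R := ℂ) (π j i')) :=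
          Stmt12Aux.helperC (fun k => ∑ n, ∑ m, (χ m (e n)) • (π l n * ψ k m)) Z
            (fun j => antipode (R := ℂ) (π j i')) (fun m' j => χinv j m')
      _ = ∑ m', ∑ j, (χinv j m') • ((∑ n, (χ m' (e n)) • π l n) * antipode (R := ℂ) (π j i')) := by
          refine Finset.sum_congr rfl fun m' _ => Finset.sum_congr rfl fun j _ => ?_
          rw [Stmt12Aux.helperA ψ Z hZ1 (fun n m => χ m (e n)) (fun n => π l n) m']
      _ = ∑ j, ∑ n, (∑ m', χinv j m' * χ m' (e n)) • (π l n * antipode (R := ℂ) (π j i')) :=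
          Stmt12Aux.helperD (fun j m' => χinv j m') (fun m' n => χ m' (e n))
            (fun n => π l n) (fun j => antipode (R := ℂ) (π j i'))
      _ = ∑ j, ∑ n, (if j = n then (1:ℂ) else 0) • (π l n * antipode (R := ℂ) (π j i')) := by
          refine Finset.sum_congr rfl fun j _ => Finset.sum_congr rfl fun n _ => ?_
          rw [hχinv2 j n]
      _ = ∑ j, π l j * antipode (R := ℂ) (π j i') := by
          refine Finset.sum_congr rfl fun j _ => ?_
          rw [Finset.sum_eq_single j (fun n _ hn => by simp [Ne.symm hn]) (by simp)]
          simp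
      _ = if l = i' then 1 else 0 := hπ2 l i'
  -- y * W = 1
  have hyW : ∀ k i', ∑ l, (∑ m, ∑ j, (χinv j m) • (Z k m * antipode (R := ℂ) (π j l)))
      * (∑ n, ∑ m, (χ m (e n)) • (π l n * ψ i' m))
      = if k = i' then (1:H) else 0 := by
    intro k i'
    calc ∑ l, (∑ m, ∑ j, (χinv j m) • (Z k m * antipode (R := ℂ) (π j l)))
          * (∑ n, ∑ m, (χ m (e n)) • (π l n * ψ i' m))
        = ∑ m, ∑ j, (χinv j m) • (Z k m * (∑ l, antipode (R := ℂ) (π j l)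
            * (∑ n, ∑ m'', (χ m'' (e n)) • (π l n * ψ i' m'')))) :=
          Stmt12Aux.helperE (fun l => ∑ n, ∑ m'', (χ m'' (e n)) • (π l n * ψ i' m''))
            (fun m => Z k m) (fun j l => antipode (R := ℂ) (π j l)) (fun m j => χinv j m)
      _ = ∑ m, ∑ j, (χinv j m) • (Z k m * (∑ m', (χ m' (e j)) • ψ i' m')) := by
          refine Finset.sum_congr rfl fun m _ => Finset.sum_congr rfl fun j _ => ?_
          rw [Stmt12Aux.helperB (fun l => antipode (R := ℂ) (π j l)) π ψ
            (fun n m' => χ m' (e n)) j i' (fun n => hπ1 j n)]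
      _ = ∑ m, ∑ m', (∑ j, χ m' (e j) * χinv j m) • (Z k m * ψ i' m') :=
          Stmt12Aux.helperF (fun j m => χinv j m) (fun m' j => χ m' (e j))
            (fun m => Z k m) (fun m' => ψ i' m')
      _ = ∑ m, ∑ m', (if m' = m then (1:ℂ) else 0) • (Z k m * ψ i' m') := by
          refine Finset.sum_congr rfl fun m _ => Finset.sum_congr rfl fun m' _ => ?_
          rw [hχinv1 m' m]
      _ = ∑ m, Z k m * ψ i' m := by
          refine Finset.sum_congr rfl fun m _ => ?_
          rw [Finset.sum_eq_single m (fun m' _ hm => by simp [hm]) (by simp)]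
          simp
      _ = if i' = k then 1 else 0 := hZ2 k i'
      _ = if k = i' then 1 else 0 := by simp [eq_comm]
  -- closure gives y ∈ X
  have hymem : ∀ k i', (∑ m, ∑ j, (χinv j m) • (Z k m * antipode (R := ℂ) (π j i'))) ∈ X := by
    intro k i'
    exact hclosure M (fun l k' => ∑ n, ∑ m, (χ m (e n)) • (π l n * ψ k' m))
      (fun k' i'' => ∑ m, ∑ j, (χinv j m) • (Z k' m * antipode (R := ℂ) (π j i'')))
      hWmem hWy hyW k i'
  -- V ∈ X
  have hVinX : ∀ k, (∑ t, ∑ m, (χ m (a2 t)) • (a1 t * ψ k m)) ∈ X :=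
    fun k => hVmem a ι instι a1 a2 hrep k
  -- final identity
  have final : (∑ t, ∑ j, ∑ k, (χ k (a2 t) * χinv j k) •
        (a1 t * antipode (R := ℂ) (π j i)))
      = ∑ k, (∑ t, ∑ m, (χ m (a2 t)) • (a1 t * ψ k m))
          * (∑ m, ∑ j, (χinv j m) • (Z k m * antipode (R := ℂ) (π j i))) := by
    calc ∑ t, ∑ j, ∑ k, (χ k (a2 t) * χinv j k) • (a1 t * antipode (R := ℂ) (π j i))
        = ∑ j, ∑ t, ∑ k, (χ k (a2 t) * χinv j k) • (a1 t * antipode (R := ℂ) (π j i)) :=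
          Finset.sum_comm
      _ = ∑ j, ∑ t, (∑ k, χinv j k * χ k (a2 t)) • (a1 t * antipode (R := ℂ) (π j i)) := by
          refine Finset.sum_congr rfl fun j _ => Finset.sum_congr rfl fun t _ => ?_
          rw [Finset.sum_smul]
          exact Finset.sum_congr rfl fun k _ => by rw [mul_comm (χ k (a2 t))]
      _ = ∑ m', ∑ j, (χinv j m') • ((∑ t, (χ m' (a2 t)) • a1 t)
            * antipode (R := ℂ) (π j i)) :=
          (Stmt12Aux.helperD (fun j m' => χinv j m') (fun m' t => χ m' (a2 t))
            a1 (fun j => antipode (R := ℂ) (π j i))).symm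
      _ = ∑ m', ∑ j, (χinv j m') • ((∑ k, (∑ t, ∑ m, (χ m (a2 t)) • (a1 t * ψ k m)) * Z k m')
            * antipode (R := ℂ) (π j i)) := by
          refine Finset.sum_congr rfl fun m' _ => Finset.sum_congr rfl fun j _ => ?_
          rw [Stmt12Aux.helperA ψ Z hZ1 (fun t m => χ m (a2 t)) a1 m']
      _ = ∑ k, (∑ t, ∑ m, (χ m (a2 t)) • (a1 t * ψ k m))
            * (∑ m, ∑ j, (χinv j m) • (Z k m * antipode (R := ℂ) (π j i))) :=
          (Stmt12Aux.helperC (fun k => ∑ t, ∑ m, (χ m (a2 t)) • (a1 t * ψ k m)) Z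
            (fun j => antipode (R := ℂ) (π j i)) (fun m' j => χinv j m')).symm
  rw [final]
  exact sum_mem fun k _ => X.mul_mem (hVinX k) (hymem k i)
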